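/- Let x ≥ 0 and n ≥ 0 be integers and t_d ≥ 0 a real number, and suppose u_{x+1} = t_d + 1. Then u_{x+n+1} − u_{x+1} ≤ 2n·(K/(2α) + 1)·√(t_d + 1) + n²·(K/(2α) + 1)²; that is, after a delay of t_d time steps following a reset, each arm accumulates n further exploration samples within 2n(K/(2α)+1)√(t_d+1) + n²(K/(2α)+1)² additional time steps. -/

import Mathlib

/-- For the diminishing-exploration schedule `u` (with parameters
`K ≥ 1`, `α > 0`), if `x ≥ 0` and `n ≥ 0` are integers, `t_d ≥ 0` is a real, and
`u (x+1) = t_d + 1`, then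
`u (x+n+1) − u (x+1) ≤ 2n·(K/(2α) + 1)·√(t_d + 1) + n²·(K/(2α) + 1)²`. -/
theorem diminishing_exploration_delay_bound
    (K α : ℝ) (hK : 1 ≤ K) (hα : 0 < α) (u : ℕ → ℝ)
    (h1 : u 1 = ((⌈(α - K / (4 * α)) ^ 2⌉ : ℤ) : ℝ))
    (hrec : ∀ n : ℕ, 2 ≤ n →
      u n = ((⌈u (n - 1) + (K / α) * Real.sqrt (u (n - 1)) + K ^ 2 / (4 * α ^ 2)⌉ : ℤ) : ℝ))
    (x n : ℕ) (td : ℝ) (htd : 0 ≤ td) (hstart : u (x + 1) = td + 1) :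
    u (x + n + 1) - u (x + 1) ≤
      2 * (n : ℝ) * (K / (2 * α) + 1) * Real.sqrt (td + 1) +
        (n : ℝ) ^ 2 * (K / (2 * α) + 1) ^ 2 := by
  set c : ℝ := K / (2 * α) + 1 with hc
  have hp : 0 < K / (2 * α) := by positivity
  have hKα : K / α = 2 * (K / (2 * α)) := by field_simp
  -- Key induction: u stays ≥ td+1 and √(u (x+m+1)) ≤ √(td+1) + m * c
  have key : ∀ m : ℕ, td + 1 ≤ u (x + m + 1) ∧
      Real.sqrt (u (x + m + 1)) ≤ Real.sqrt (td + 1) + m * c := by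
    intro m
    induction m with
    | zero => simp [hstart]
    | succ m ih =>
      obtain ⟨hlb, hsq⟩ := ih
      have hu_nonneg : (0 : ℝ) ≤ u (x + m + 1) := by linarith
      set s : ℝ := Real.sqrt (u (x + m + 1)) with hs
      have hs1 : 1 ≤ s := by
        rw [hs, show (1 : ℝ) = Real.sqrt 1 by simp]
        exact Real.sqrt_le_sqrt (by linarith)
      have hs2 : s ^ 2 = u (x + m + 1) := Real.sq_sqrt hu_nonneg
      have hu := hrec (x + m + 2) (by omega)
      simp only [show x + m + 2 - 1 = x + m + 1 from rfl] at hu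
      set a : ℝ := u (x + m + 1) + (K / α) * s + K ^ 2 / (4 * α ^ 2) with ha
      have hK24 : K ^ 2 / (4 * α ^ 2) = (K / (2 * α)) ^ 2 := by field_simp; ring
      have hceil_lt : u (x + m + 2) < a + 1 := by
        rw [hu]; exact_mod_cast Int.ceil_lt_add_one a
      have hceil_ge : a ≤ u (x + m + 2) := by
        rw [hu]; exact_mod_cast Int.le_ceil a
      have hub : u (x + m + 2) ≤ (s + c) ^ 2 := by
        have h2 : a + 1 ≤ (s + c) ^ 2 := by
          rw [ha, hc, hK24, hKα, ← hs2]
          nlinarith [hp, hs1]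
        linarith
      have hlb' : td + 1 ≤ u (x + m + 2) := by
        have : u (x + m + 1) ≤ a := by
          rw [ha]
          have : 0 ≤ (K / α) * s := by positivity
          have : 0 ≤ K ^ 2 / (4 * α ^ 2) := by positivity
          nlinarith [mul_nonneg (le_of_lt (by positivity : (0:ℝ) < K / α)) (by linarith : (0:ℝ) ≤ s)]
        linarith
      constructor
      · exact_mod_cast hlb'
      · have hsc : 0 ≤ s + c := by positivity
        calc Real.sqrt (u (x + m + 2)) ≤ Real.sqrt ((s + c) ^ 2) :=
              Real.sqrt_le_sqrt hub
          _ = s + c := by rw [Real.sqrt_sq hsc]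
          _ ≤ Real.sqrt (td + 1) + (m + 1 : ℕ) * c := by
              push_cast
              have hc0 : 0 ≤ c := by positivity
              nlinarith [hsq]
  obtain ⟨hlb, hsq⟩ := key n
  have hu_nonneg : (0 : ℝ) ≤ u (x + n + 1) := by linarith
  have h1' : u (x + n + 1) = (Real.sqrt (u (x + n + 1))) ^ 2 := (Real.sq_sqrt hu_nonneg).symm
  have htd1 : (Real.sqrt (td + 1)) ^ 2 = td + 1 := Real.sq_sqrt (by linarith)
  have hrt : 0 ≤ Real.sqrt (u (x + n + 1)) := Real.sqrt_nonneg _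
  have hnc : (0 : ℝ) ≤ (n : ℝ) * c := by positivity
  have hbound : u (x + n + 1) ≤ (Real.sqrt (td + 1) + n * c) ^ 2 := by
    rw [h1']
    exact pow_le_pow_left₀ hrt hsq 2
  have hexp : (Real.sqrt (td + 1) + n * c) ^ 2 =
      (td + 1) + 2 * (n : ℝ) * c * Real.sqrt (td + 1) + (n : ℝ) ^ 2 * c ^ 2 := by
    have : (Real.sqrt (td + 1) + n * c) ^ 2 =
        (Real.sqrt (td + 1)) ^ 2 + 2 * (n : ℝ) * c * Real.sqrt (td + 1) +
          (n : ℝ) ^ 2 * c ^ 2 := by ring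
    rw [this, htd1]
  rw [hstart]
  linarith [hbound, hexp.le, hexp.ge]
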